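/- arXiv:2511.12415 — 7 statements merged into one kernel-verified Lean document; each statement's English description precedes it below -/
import Mathlib

section
/- If the two-view imaging equation z_j X_j = z_i R X_i + t holds with depths z_i > 0 and z_j > 0, then the analytical depth formulas z_i ‖θ‖ = ‖X_j × t‖ and z_j ‖θ‖ = ‖(R X_i) × t‖ hold, where θ := (R X_i) × X_j. -/
open Matrix

/-- Euclidean norm of a vector in ℝ³. -/
noncomputable def enorm3 (v : Fin 3 → ℝ) : ℝ := Real.sqrt (v ⬝ᵥ v)

lemma enorm3_smul (c : ℝ) (v : Fin 3 → ℝ) : enorm3 (c • v) = |c| * enorm3 v := by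
  unfold enorm3
  rw [smul_dotProduct, dotProduct_smul, smul_smul, smul_eq_mul]
  rw [show c * c = c ^ 2 by ring, Real.sqrt_mul (sq_nonneg c), Real.sqrt_sq_eq_abs]

/-- If the two-view imaging equation `zⱼ Xⱼ = zᵢ R Xᵢ + t` holds with
positive depths, then `zᵢ ‖θ‖ = ‖Xⱼ × t‖` and `zⱼ ‖θ‖ = ‖(R Xᵢ) × t‖`,
where `θ := (R Xᵢ) × Xⱼ`. -/
theorem stmt2 (R : Matrix (Fin 3) (Fin 3) ℝ)
    (hR : Rᵀ * R = 1) (hRdet : R.det = 1)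
    (Xi Xj t : Fin 3 → ℝ) (zi zj : ℝ)
    (himg : zj • Xj = zi • R.mulVec Xi + t)
    (hzi : 0 < zi) (hzj : 0 < zj)
    (θ : Fin 3 → ℝ) (hθ : θ = (R.mulVec Xi) ⨯₃ Xj) :
    zi * enorm3 θ = enorm3 (Xj ⨯₃ t) ∧ zj * enorm3 θ = enorm3 ((R.mulVec Xi) ⨯₃ t) := by
  set Y := R.mulVec Xi with hY
  have ht : t = zj • Xj - zi • Y := by
    rw [eq_sub_iff_add_eq, add_comm, ← himg]
  have h1 : Xj ⨯₃ t = zi • θ := by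
    subst hθ ht
    funext k
    fin_cases k <;>
      simp [crossProduct, Matrix.smul_apply, Pi.sub_apply, Pi.smul_apply, smul_eq_mul] <;> ring
  have h2 : Y ⨯₃ t = zj • θ := by
    subst hθ ht
    funext k
    fin_cases k <;>
      simp [crossProduct, Matrix.smul_apply, Pi.sub_apply, Pi.smul_apply, smul_eq_mul] <;> ring
  constructor
  · rw [h1, enorm3_smul, abs_of_pos hzi]
  · rw [h2, enorm3_smul, abs_of_pos hzj]
end

section
/- Suppose the two-view imaging equation z_j X_j = z_i R X_i + t holds and θ := (R X_i) × X_j ≠ 0. Then z_i > 0 if and only if θᵀ (X_j × t) > 0, and z_j > 0 if and only if θᵀ ((R X_i) × t) > 0; i.e., the chirality of each view is equivalent to θ having the same direction as X_j × t, respectively (R X_i) × t. -/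
open Matrix

/-- If the two-view imaging equation `zⱼ Xⱼ = zᵢ R Xᵢ + t` holds and
`θ := (R Xᵢ) × Xⱼ ≠ 0`, then `zᵢ > 0 ↔ θᵀ (Xⱼ × t) > 0` and
`zⱼ > 0 ↔ θᵀ ((R Xᵢ) × t) > 0`. -/
theorem stmt3 (R : Matrix (Fin 3) (Fin 3) ℝ)
    (hR : Rᵀ * R = 1) (hRdet : R.det = 1)
    (Xi Xj t : Fin 3 → ℝ) (zi zj : ℝ)
    (himg : zj • Xj = zi • R.mulVec Xi + t)
    (θ : Fin 3 → ℝ) (hθ : θ = (R.mulVec Xi) ⨯₃ Xj) (hθne : θ ≠ 0) :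
    (0 < zi ↔ 0 < θ ⬝ᵥ (Xj ⨯₃ t)) ∧ (0 < zj ↔ 0 < θ ⬝ᵥ ((R.mulVec Xi) ⨯₃ t)) := by
  set Y := R.mulVec Xi with hY
  have ht : t = zj • Xj - zi • Y := by
    rw [eq_sub_iff_add_eq, add_comm, ← himg]
  have hpos : 0 < θ ⬝ᵥ θ := by
    have hne : θ ⬝ᵥ θ ≠ 0 := (dotProduct_self_eq_zero (v := θ)).ne.mpr hθne
    have hnn : 0 ≤ θ ⬝ᵥ θ := by
      simp only [dotProduct, ← sq]
      positivity
    exact hnn.lt_of_ne (Ne.symm hne)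
  have h1 : θ ⬝ᵥ (Xj ⨯₃ t) = zi * (θ ⬝ᵥ θ) := by
    subst ht hθ
    simp [crossProduct, dotProduct, Fin.sum_univ_three]
    ring
  have h2 : θ ⬝ᵥ (Y ⨯₃ t) = zj * (θ ⬝ᵥ θ) := by
    subst ht hθ
    simp [crossProduct, dotProduct, Fin.sum_univ_three]
    ring
  rw [h1, h2]
  constructor <;> constructor <;> intro h
  · positivity
  · nlinarith
  · positivity
  · nlinarith
end

section
/- (Pair-of-pose-only constraint, non-pure-rotation case.) Suppose the two-view imaging equation z_j X_j = z_i R X_i + t holds with depths z_i > 0, z_j > 0 and t ≠ 0, and let t̂ := t/‖t‖. Then ‖(R X_i) × t̂‖ X_j = ‖X_j × t̂‖ R X_i + ‖θ‖ t̂, where θ := (R X_i) × X_j. -/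
open Matrix

lemma enorm3_pos {v : Fin 3 → ℝ} (hv : v ≠ 0) : 0 < enorm3 v := by
  unfold enorm3
  apply Real.sqrt_pos.2
  have h0 : (0:ℝ) ≤ v ⬝ᵥ v := by
    unfold dotProduct
    exact Finset.sum_nonneg fun i _ => mul_self_nonneg _
  rcases h0.lt_or_eq with h | h
  · exact h
  · exact absurd (dotProduct_self_eq_zero.mp h.symm) hv

lemma enorm3_nonneg (v : Fin 3 → ℝ) : 0 ≤ enorm3 v := Real.sqrt_nonneg _

/-- PPO constraint, non-pure-rotation case: if `zⱼ Xⱼ = zᵢ R Xᵢ + t` holds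
with `zᵢ > 0`, `zⱼ > 0` and `t ≠ 0`, and `t̂ := t/‖t‖`, then
`‖(R Xᵢ) × t̂‖ Xⱼ = ‖Xⱼ × t̂‖ R Xᵢ + ‖θ‖ t̂`, where `θ := (R Xᵢ) × Xⱼ`. -/
theorem stmt4 (R : Matrix (Fin 3) (Fin 3) ℝ)
    (hR : Rᵀ * R = 1) (hRdet : R.det = 1)
    (Xi Xj t : Fin 3 → ℝ) (zi zj : ℝ)
    (himg : zj • Xj = zi • R.mulVec Xi + t)
    (hzi : 0 < zi) (hzj : 0 < zj) (ht : t ≠ 0)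
    (θ : Fin 3 → ℝ) (hθ : θ = (R.mulVec Xi) ⨯₃ Xj)
    (that : Fin 3 → ℝ) (hthat : that = (enorm3 t)⁻¹ • t) :
    enorm3 ((R.mulVec Xi) ⨯₃ that) • Xj
      = enorm3 (Xj ⨯₃ that) • R.mulVec Xi + enorm3 θ • that := by
  set Y := R.mulVec Xi with hY
  have het : 0 < enorm3 t := enorm3_pos ht
  have htc : t = zj • Xj - zi • Y := by rw [himg]; abel
  have h1 : Y ⨯₃ that = ((enorm3 t)⁻¹ * zj) • θ := by
    rw [hthat, htc, hθ]
    simp [map_sub, _root_.map_smul, cross_self, smul_smul]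
  have h2 : Xj ⨯₃ that = ((enorm3 t)⁻¹ * zi) • θ := by
    rw [hthat, htc, hθ]
    have hac : Xj ⨯₃ Y = -(Y ⨯₃ Xj) := (cross_anticomm Y Xj).symm
    simp only [_root_.map_smul, map_sub, hac, cross_self, smul_zero, zero_sub, smul_neg, neg_neg, smul_smul, sub_neg_eq_add, zero_add]
  rw [h1, h2, enorm3_smul, enorm3_smul, hthat,
    abs_of_pos (mul_pos (inv_pos.2 het) hzj), abs_of_pos (mul_pos (inv_pos.2 het) hzi)]
  have key := congrArg (fun v => ((enorm3 t)⁻¹ * enorm3 θ) • v) himg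
  simp only [smul_add, smul_smul] at key ⊢
  rw [show (enorm3 t)⁻¹ * zj * enorm3 θ = (enorm3 t)⁻¹ * enorm3 θ * zj from by ring,
    show (enorm3 t)⁻¹ * zi * enorm3 θ = (enorm3 t)⁻¹ * enorm3 θ * zi from by ring,
    show enorm3 θ * (enorm3 t)⁻¹ = (enorm3 t)⁻¹ * enorm3 θ from by ring]
  exact key
end

section
/- (Core identity behind Corollary 3.) Suppose the two-view imaging equation z_j X_j = z_i R X_i + t holds with depth z_i > 0, and set θ := (R X_i) × X_j. Then ‖θ‖ ‖X_j × t‖ R X_i + ‖θ‖² t = −(X_j × θ) × ((R X_i) × t), and this common value equals z_j ‖θ‖² X_j. (The right-hand side is S t for the matrix S := −[X_j × θ]_× [R X_i]_×, so the homogeneous reprojection vector ‖θ‖ Y, with Y := ‖X_j × t‖ R X_i + ‖θ‖ t, depends linearly on t.) -/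
open Matrix

/-- core identity behind Corollary 3: if `zⱼ Xⱼ = zᵢ R Xᵢ + t` holds with
`zᵢ > 0` and `θ := (R Xᵢ) × Xⱼ`, then
`‖θ‖ ‖Xⱼ × t‖ R Xᵢ + ‖θ‖² t = −(Xⱼ × θ) × ((R Xᵢ) × t)`, and this common value equals
`zⱼ ‖θ‖² Xⱼ`. -/
theorem stmt10 (R : Matrix (Fin 3) (Fin 3) ℝ)
    (hR : Rᵀ * R = 1) (hRdet : R.det = 1)
    (Xi Xj t : Fin 3 → ℝ) (zi zj : ℝ)
    (himg : zj • Xj = zi • R.mulVec Xi + t)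
    (hzi : 0 < zi)
    (θ : Fin 3 → ℝ) (hθ : θ = (R.mulVec Xi) ⨯₃ Xj) :
    (enorm3 θ * enorm3 (Xj ⨯₃ t)) • R.mulVec Xi + (enorm3 θ) ^ 2 • t
        = -((Xj ⨯₃ θ) ⨯₃ ((R.mulVec Xi) ⨯₃ t)) ∧
      -((Xj ⨯₃ θ) ⨯₃ ((R.mulVec Xi) ⨯₃ t)) = (zj * (enorm3 θ) ^ 2) • Xj := by
  set u := R.mulVec Xi with hu
  have ht : t = zj • Xj - zi • u := by rw [himg]; abel
  have hn2 : enorm3 θ ^ 2 = θ 0 ^ 2 + θ 1 ^ 2 + θ 2 ^ 2 := by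
    have h0 : θ ⬝ᵥ θ = θ 0 ^ 2 + θ 1 ^ 2 + θ 2 ^ 2 := by
      simp [dotProduct, Fin.sum_univ_three]; ring
    rw [enorm3, Real.sq_sqrt (by nlinarith [sq_nonneg (θ 0), sq_nonneg (θ 1), sq_nonneg (θ 2)]), h0]
  have hc : Xj ⨯₃ t = zi • θ := by
    rw [ht, hθ]
    ext i
    fin_cases i <;> simp [cross_apply] <;> ring
  have hnt : enorm3 (Xj ⨯₃ t) = zi * enorm3 θ := by
    rw [hc, enorm3, enorm3]
    have : (zi • θ) ⬝ᵥ (zi • θ) = zi ^ 2 * (θ ⬝ᵥ θ) := by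
      simp [dotProduct, Fin.sum_univ_three]; ring
    rw [this, Real.sqrt_mul (by positivity), Real.sqrt_sq hzi.le]
  have hmul : enorm3 θ * enorm3 (Xj ⨯₃ t) = zi * enorm3 θ ^ 2 := by
    rw [hnt]; ring
  have key : enorm3 θ ^ 2 =
      (u 1 * Xj 2 - u 2 * Xj 1) ^ 2 + (u 2 * Xj 0 - u 0 * Xj 2) ^ 2
        + (u 0 * Xj 1 - u 1 * Xj 0) ^ 2 := by
    rw [hn2, hθ, cross_apply]
    simp
  constructor
  · rw [hmul, key]
    ext i
    fin_cases i <;>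
      simp [cross_apply, ht, hθ, Pi.smul_apply, smul_eq_mul] <;> ring
  · rw [key]
    ext i
    fin_cases i <;>
      simp [cross_apply, ht, hθ, Pi.smul_apply, smul_eq_mul] <;> ring
end

section
/- (Corollary 4, Case 2, Holoplane degeneracy.) Let R ∈ SO(3), X_i, X_j ∈ ℝ³, set θ := (R X_i) × X_j and assume θ ≠ 0. If x ∈ ℝ³ satisfies θᵀ x = 0, then the vector S x := −(X_j × θ) × ((R X_i) × x) is a scalar multiple of X_j; equivalently X_j × (S x) = 0. (Hence any solution x of P^S x = 0 yields a zero pose-only reprojection residual.) -/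
open Matrix

/-- Corollary 4, Case 2, Holoplane degeneracy: let `θ := (R Xᵢ) × Xⱼ ≠ 0`.
If `θᵀ x = 0`, then `S x := −(Xⱼ × θ) × ((R Xᵢ) × x)` is a scalar multiple of `Xⱼ`;
equivalently `Xⱼ × (S x) = 0`. -/
theorem stmt11 (R : Matrix (Fin 3) (Fin 3) ℝ)
    (hR : Rᵀ * R = 1) (hRdet : R.det = 1)
    (Xi Xj : Fin 3 → ℝ)
    (θ : Fin 3 → ℝ) (hθ : θ = (R.mulVec Xi) ⨯₃ Xj) (hθne : θ ≠ 0)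
    (x : Fin 3 → ℝ) (hx : θ ⬝ᵥ x = 0) :
    (∃ c : ℝ, -((Xj ⨯₃ θ) ⨯₃ ((R.mulVec Xi) ⨯₃ x)) = c • Xj) ∧
      Xj ⨯₃ (-((Xj ⨯₃ θ) ⨯₃ ((R.mulVec Xi) ⨯₃ x))) = 0 := by
  set a := R.mulVec Xi with ha
  subst hθ
  simp only [dotProduct, crossProduct, Fin.sum_univ_three, LinearMap.mk₂_apply,
    Matrix.cons_val_zero, Matrix.cons_val_one, Matrix.head_cons,
    Matrix.cons_val_two, Matrix.tail_cons] at hx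
  have key : -((Xj ⨯₃ ((a ⨯₃ Xj))) ⨯₃ (a ⨯₃ x)) = ((a ⨯₃ Xj) ⬝ᵥ (a ⨯₃ x)) • Xj := by
    funext i
    fin_cases i
    · simp [crossProduct, dotProduct, Fin.sum_univ_three]
      linear_combination (a 1 * Xj 2 - a 2 * Xj 1) * hx
    · simp [crossProduct, dotProduct, Fin.sum_univ_three]
      linear_combination (a 2 * Xj 0 - a 0 * Xj 2) * hx
    · simp [crossProduct, dotProduct, Fin.sum_univ_three]
      linear_combination (a 0 * Xj 1 - a 1 * Xj 0) * hx
  refine ⟨⟨_, key⟩, ?_⟩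
  rw [key, _root_.map_smul, cross_self, smul_zero]
end

section
/- Let M be a real symmetric 3×3 matrix, and set p := tr(adj M) − tr(M)²/3 and q := −det M + tr(M)·tr(adj M)/3 − 2 tr(M)³/27. Then the Cardano discriminant is nonpositive: (q/2)² + (p/3)³ ≤ 0. -/
open Matrix

lemma trace_adjugate_diagonal_fin3 (a : Fin 3 → ℝ) :
    (adjugate (diagonal a)).trace = a 1 * a 2 + a 0 * a 2 + a 0 * a 1 := by
  rw [adjugate_diagonal, trace_diagonal, Fin.sum_univ_three]
  have h0 : ∀ i : Fin 3, Finset.univ.erase i = ({0,1,2} : Finset (Fin 3)).erase i := by decide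
  rw [h0 0, h0 1, h0 2,
    show (({0,1,2} : Finset (Fin 3)).erase 0) = {1,2} from by decide,
    show (({0,1,2} : Finset (Fin 3)).erase 1) = {0,2} from by decide,
    show (({0,1,2} : Finset (Fin 3)).erase 2) = {0,1} from by decide]
  rw [Finset.prod_pair (by decide), Finset.prod_pair (by decide), Finset.prod_pair (by decide)]

/-- for a real symmetric 3×3 matrix `M`, with
`p := tr(adj M) − tr(M)²/3` and `q := −det M + tr(M)·tr(adj M)/3 − 2 tr(M)³/27`,
the Cardano discriminant is nonpositive: `(q/2)² + (p/3)³ ≤ 0`. -/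
theorem stmt14 (M : Matrix (Fin 3) (Fin 3) ℝ) (hM : Mᵀ = M)
    (p q : ℝ)
    (hp : p = (M.adjugate).trace - M.trace ^ 2 / 3)
    (hq : q = -M.det + M.trace * (M.adjugate).trace / 3 - 2 * M.trace ^ 3 / 27) :
    (q / 2) ^ 2 + (p / 3) ^ 3 ≤ 0 := by
  have hH : M.IsHermitian := by
    rwa [Matrix.IsHermitian, conjTranspose_eq_transpose_of_trivial]
  set a : Fin 3 → ℝ := hH.eigenvalues with ha
  set U : Matrix (Fin 3) (Fin 3) ℝ := (hH.eigenvectorUnitary : Matrix (Fin 3) (Fin 3) ℝ) with hU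
  have hDiag : (diagonal ((RCLike.ofReal : ℝ → ℝ) ∘ a)) = diagonal a := by
    simp [RCLike.ofReal_real_eq_id]
  have hspec : M = U * diagonal a * star U := by
    conv_lhs => rw [hH.spectral_theorem]
    rw [hDiag, Unitary.conjStarAlgAut_apply]
  have hUU : U * star U = 1 := (Matrix.mem_unitaryGroup_iff).mp hH.eigenvectorUnitary.2
  have hUU' : star U * U = 1 := (Matrix.mem_unitaryGroup_iff').mp hH.eigenvectorUnitary.2
  have htr : M.trace = a 0 + a 1 + a 2 := by
    rw [hspec, trace_mul_cycle, hUU', one_mul, trace_diagonal, Fin.sum_univ_three]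
  have hdet : M.det = a 0 * a 1 * a 2 := by
    rw [hH.det_eq_prod_eigenvalues, Fin.prod_univ_three]; norm_num; rfl
  have hadj : (M.adjugate).trace = a 1 * a 2 + a 0 * a 2 + a 0 * a 1 := by
    have hMadj : M.adjugate = adjugate (star U) * (adjugate (diagonal a) * adjugate U) := by
      rw [hspec, adjugate_mul_distrib, adjugate_mul_distrib]
    rw [hMadj, trace_mul_comm, mul_assoc, ← adjugate_mul_distrib, hUU', adjugate_one, mul_one,
      trace_adjugate_diagonal_fin3]
  have key : (q / 2) ^ 2 + (p / 3) ^ 3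
      = -(((a 0 - a 1) * (a 1 - a 2) * (a 0 - a 2)) ^ 2) / 108 := by
    rw [hp, hq, htr, hdet, hadj]; ring
  rw [key]
  have := sq_nonneg ((a 0 - a 1) * (a 1 - a 2) * (a 0 - a 2))
  linarith
end

section
/- (Closed-form minimum eigenvalue.) Let M be a real symmetric 3×3 matrix, set p := tr(adj M) − tr(M)²/3 and q := −det M + tr(M)·tr(adj M)/3 − 2 tr(M)³/27, and assume p < 0. Then λ_min := −2 √(−p/3) · cos( (1/3) · arccos( (q/2) · √(−27/p³) ) ) + tr(M)/3 is an eigenvalue of M, and every eigenvalue μ of M satisfies λ_min ≤ μ; i.e., λ_min is the smallest eigenvalue of M. -/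
open Matrix

lemma stmt15_aux_bound (u c0 y : ℝ) (hu : 0 < u) (h1 : -1 ≤ c0) (h2 : c0 ≤ 1)
    (hcu : y ^ 3 + -3 * u ^ 2 * y + 2 * u ^ 3 * c0 = 0) :
    -(2*u) ≤ y ∧ y ≤ 2*u := by
  have hl : (y + 2*u) * (y - u)^2 = 2*u^3*(1 - c0) := by linear_combination hcu
  have hr : (y - 2*u) * (y + u)^2 = -(2*u^3*(1 + c0)) := by linear_combination hcu
  constructor
  · by_contra h
    push_neg at h
    have hyu : (0:ℝ) < u - y := by linarith
    nlinarith [hl, mul_pos (show (0:ℝ) < -(2*u) - y by linarith) (mul_pos hyu hyu),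
      mul_nonneg (le_of_lt (pow_pos hu 3)) (show (0:ℝ) ≤ 1 - c0 by linarith)]
  · by_contra h
    push_neg at h
    have hyu : (0:ℝ) < y + u := by linarith
    nlinarith [hr, mul_pos (show (0:ℝ) < y - 2*u by linarith) (mul_pos hyu hyu),
      mul_nonneg (le_of_lt (pow_pos hu 3)) (show (0:ℝ) ≤ 1 + c0 by linarith)]

lemma stmt15_aux_c2 (u c0 p q : ℝ) (hu : 0 < u) (hp3 : p ^ 3 = -27 * u ^ 6)
    (hq2 : q ^ 2 = 4 * u ^ 6 * c0 ^ 2) (hdisc : 4 * p ^ 3 + 27 * q ^ 2 ≤ 0) :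
    -1 ≤ c0 ∧ c0 ≤ 1 := by
  have h : c0 ^ 2 ≤ 1 := by nlinarith [pow_pos hu 6]
  constructor
  · nlinarith [sq_nonneg (c0 + 1)]
  · nlinarith [sq_nonneg (c0 - 1)]

lemma stmt15_detExpand (M : Matrix (Fin 3) (Fin 3) ℝ) (x : ℝ) :
    (x • (1 : Matrix (Fin 3) (Fin 3) ℝ) - M).det =
      x ^ 3 - M.trace * x ^ 2 + (M.adjugate).trace * x - M.det := by
  simp [det_fin_three, trace_fin_three, adjugate_fin_three, Matrix.one_apply,
    Matrix.smul_apply, Matrix.sub_apply]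
  ring

lemma stmt15_factor (M : Matrix (Fin 3) (Fin 3) ℝ) (hH : M.IsHermitian) :
    ∃ a b c : ℝ, ∀ x : ℝ, (x • (1 : Matrix (Fin 3) (Fin 3) ℝ) - M).det =
      (x - a) * (x - b) * (x - c) := by
  refine ⟨hH.eigenvalues 0, hH.eigenvalues 1, hH.eigenvalues 2, fun x => ?_⟩
  set U : Matrix (Fin 3) (Fin 3) ℝ :=
    (Matrix.IsHermitian.eigenvectorUnitary hH : Matrix (Fin 3) (Fin 3) ℝ) with hU
  have hUs : U * star U = 1 :=
    (Matrix.mem_unitaryGroup_iff).mp (Matrix.IsHermitian.eigenvectorUnitary hH).2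
  have key : x • (1 : Matrix (Fin 3) (Fin 3) ℝ) - M
      = U * (x • (1 : Matrix (Fin 3) (Fin 3) ℝ)
          - diagonal (RCLike.ofReal ∘ hH.eigenvalues)) * star U := by
    rw [mul_sub, sub_mul]
    congr 1
    · rw [mul_smul_comm, smul_mul_assoc, mul_one, hUs]
    · exact hH.spectral_theorem
  rw [key, det_mul, det_mul, mul_right_comm,
    show U.det * (star U).det = 1 by rw [← det_mul, hUs, det_one], one_mul]
  simp [det_fin_three, diagonal, Matrix.one_apply]

lemma stmt15_eig_iff_det (M : Matrix (Fin 3) (Fin 3) ℝ) (μ : ℝ) :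
    (∃ v : Fin 3 → ℝ, v ≠ 0 ∧ M.mulVec v = μ • v) ↔
      (μ • (1 : Matrix (Fin 3) (Fin 3) ℝ) - M).det = 0 := by
  rw [← Matrix.exists_mulVec_eq_zero_iff]
  constructor
  · rintro ⟨v, hv, hMv⟩
    exact ⟨v, hv, by
      rw [Matrix.sub_mulVec, Matrix.smul_mulVec, Matrix.one_mulVec, hMv, sub_self]⟩
  · rintro ⟨v, hv, hMv⟩
    refine ⟨v, hv, ?_⟩
    rw [Matrix.sub_mulVec, Matrix.smul_mulVec, Matrix.one_mulVec, sub_eq_zero] at hMv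
    exact hMv.symm


set_option maxHeartbeats 1000000 in
/-- closed-form minimum eigenvalue: for a real symmetric 3×3 matrix `M`,
with `p := tr(adj M) − tr(M)²/3 < 0` and
`q := −det M + tr(M)·tr(adj M)/3 − 2 tr(M)³/27`, the number
`λmin := −2 √(−p/3) cos((1/3) arccos((q/2) √(−27/p³))) + tr(M)/3`
is an eigenvalue of `M`, and every eigenvalue of `M` is at least `λmin`. -/
theorem stmt15 (M : Matrix (Fin 3) (Fin 3) ℝ) (hM : Mᵀ = M)
    (p q : ℝ)
    (hp : p = (M.adjugate).trace - M.trace ^ 2 / 3)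
    (hq : q = -M.det + M.trace * (M.adjugate).trace / 3 - 2 * M.trace ^ 3 / 27)
    (hpneg : p < 0)
    (lmin : ℝ)
    (hlmin : lmin = -2 * Real.sqrt (-p / 3) *
        Real.cos (Real.arccos (q / 2 * Real.sqrt (-27 / p ^ 3)) / 3) + M.trace / 3) :
    (∃ v : Fin 3 → ℝ, v ≠ 0 ∧ M.mulVec v = lmin • v) ∧
      ∀ μ : ℝ, (∃ v : Fin 3 → ℝ, v ≠ 0 ∧ M.mulVec v = μ • v) → lmin ≤ μ := by
  have hH : M.IsHermitian := by
    rwa [Matrix.IsHermitian, conjTranspose_eq_transpose_of_trivial]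
  set t : ℝ := M.trace with ht0
  set s : ℝ := (M.adjugate).trace with hs0
  set d : ℝ := M.det with hd0
  obtain ⟨a, b, c, hfac⟩ := stmt15_factor M hH
  have H : ∀ x : ℝ, x ^ 3 - t * x ^ 2 + s * x - d = (x - a) * (x - b) * (x - c) := by
    intro x; rw [← stmt15_detExpand M x, hfac x]
  have h0 := H 0
  have h1 := H 1
  have hm := H (-1)
  have hda : d = a * b * c := by linear_combination -h0
  have hta : t = a + b + c := by linear_combination (-(1:ℝ)/2) * h1 - 1/2 * hm - hda
  have hsa : s = a*b + a*c + b*c := by linear_combination h1/2 - hm/2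
  clear h0 h1 hm H hfac
  have hdisc : 4 * p ^ 3 + 27 * q ^ 2 ≤ 0 := by
    have hd2 : 4 * p ^ 3 + 27 * q ^ 2 = -((a-b)*(a-c)*(b-c))^2 := by
      rw [hp, hq, hta, hsa, hda]; ring
    rw [hd2]
    exact neg_nonpos.mpr (sq_nonneg _)
  set u : ℝ := Real.sqrt (-p / 3) with hu0
  have hu : 0 < u := Real.sqrt_pos.mpr (by linarith)
  have hu2 : u ^ 2 = -p / 3 := Real.sq_sqrt (by linarith)
  have hpu : p = -3 * u ^ 2 := by linarith
  have hu3 : u ^ 3 ≠ 0 := by positivity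
  have hsq : Real.sqrt (-27 / p ^ 3) = 1 / u ^ 3 := by
    rw [show (-27 / p ^ 3 : ℝ) = (1 / u ^ 3) ^ 2 by rw [hpu]; field_simp; ring]
    exact Real.sqrt_sq (by positivity)
  set c0 : ℝ := q / 2 * Real.sqrt (-27 / p ^ 3) with hc0
  have hc0' : c0 = q / (2 * u ^ 3) := by rw [hc0, hsq]; ring
  have hqc : q = 2 * u ^ 3 * c0 := by rw [hc0']; field_simp
  obtain ⟨hcub, hclb⟩ :=
    stmt15_aux_c2 u c0 p q hu (by rw [hpu]; ring) (by rw [hqc]; ring) hdisc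
  set ψ : ℝ := Real.arccos c0 with hψ0
  have hψ1 : 0 ≤ ψ := Real.arccos_nonneg c0
  have hψ2 : ψ ≤ Real.pi := Real.arccos_le_pi c0
  have hcosψ : Real.cos ψ = c0 := Real.cos_arccos hcub hclb
  have cubic : ∀ μ : ℝ, (∃ v : Fin 3 → ℝ, v ≠ 0 ∧ M.mulVec v = μ • v) →
      (μ - t/3) ^ 3 + -3 * u ^ 2 * (μ - t/3) + 2 * u ^ 3 * c0 = 0 := by
    intro μ hμ
    have hdet := (stmt15_eig_iff_det M μ).mp hμ
    rw [stmt15_detExpand M μ, ← ht0, ← hs0, ← hd0] at hdet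
    have heq : (μ - t/3) ^ 3 + -3 * u ^ 2 * (μ - t/3) + 2 * u ^ 3 * c0
        = μ ^ 3 - t * μ ^ 2 + s * μ - d := by
      rw [← hqc, ← hpu, hp, hq]; ring
    rw [heq]; exact hdet
  have hlm : lmin = -2 * u * Real.cos (ψ / 3) + t / 3 := hlmin
  constructor
  · refine (stmt15_eig_iff_det M lmin).mpr ?_
    rw [stmt15_detExpand M lmin, ← ht0, ← hs0, ← hd0]
    have h3 : 4 * Real.cos (ψ/3) ^ 3 - 3 * Real.cos (ψ/3) = c0 := by
      rw [← Real.cos_three_mul, show 3 * (ψ/3) = ψ by ring, hcosψ]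
    have heq : lmin ^ 3 - t * lmin ^ 2 + s * lmin - d
        = (lmin - t/3) ^ 3 + -3 * u ^ 2 * (lmin - t/3) + 2 * u ^ 3 * c0 := by
      rw [← hqc, ← hpu, hp, hq]; ring
    have hy : lmin - t/3 = -2 * u * Real.cos (ψ/3) := by rw [hlm]; ring
    rw [heq, hy]
    linear_combination (-2 * u ^ 3) * h3
  · intro μ hμ
    have hcu := cubic μ hμ
    set y : ℝ := μ - t/3 with hy0
    obtain ⟨hylb, hyub⟩ := stmt15_aux_bound u c0 y hu hcub hclb hcu
    set α : ℝ := Real.arccos (y / (2*u)) with hα0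
    have hb1 : -1 ≤ y / (2*u) := by rw [le_div_iff₀ (by positivity)]; linarith
    have hb2 : y / (2*u) ≤ 1 := by rw [div_le_one (by positivity)]; linarith
    have hα1 : 0 ≤ α := Real.arccos_nonneg _
    have hα2 : α ≤ Real.pi := Real.arccos_le_pi _
    have hcosα : Real.cos α = y / (2*u) := Real.cos_arccos hb1 hb2
    have hyα : y = 2*u * Real.cos α := by
      rw [hcosα]; field_simp
    have hcos3α : Real.cos (3*α) = -c0 := by
      rw [Real.cos_three_mul]
      have hz : 2 * u^3 * (4 * Real.cos α ^ 3 - 3 * Real.cos α + c0) = 0 := by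
        rw [hyα] at hcu; linear_combination hcu
      rcases mul_eq_zero.mp hz with h | h
      · exact absurd h (by positivity)
      · linarith
    have hαle : α ≤ Real.pi - ψ/3 := by
      by_contra hcon
      push_neg at hcon
      have hlt := Real.strictAntiOn_cos
        (Set.mem_Icc.mpr ⟨by linarith, by linarith⟩ :
          Real.pi - ψ ∈ Set.Icc 0 Real.pi)
        (Set.mem_Icc.mpr ⟨by linarith, by linarith⟩ :
          3*α - 2*Real.pi ∈ Set.Icc 0 Real.pi)
        (by linarith)
      rw [Real.cos_pi_sub, hcosψ, Real.cos_sub_two_pi, hcos3α] at hlt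
      linarith
    have hcosge : Real.cos (Real.pi - ψ/3) ≤ Real.cos α := by
      rcases eq_or_lt_of_le hαle with h | h
      · rw [h]
      · exact le_of_lt (Real.strictAntiOn_cos
          (Set.mem_Icc.mpr ⟨hα1, by linarith⟩)
          (Set.mem_Icc.mpr ⟨by linarith, by linarith⟩) h)
    rw [Real.cos_pi_sub] at hcosge
    have hfin : -2 * u * Real.cos (ψ/3) ≤ y := by
      rw [hyα]
      have := mul_le_mul_of_nonneg_left hcosge (by positivity : (0:ℝ) ≤ 2*u)
      linarith [this]
    rw [hlm]
    rw [hy0] at hfin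
    linarith
end
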